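/- arXiv:1606.03351 — 3 statements merged into one kernel-verified Lean document; each statement's English description precedes it below -/
import Mathlib

section
/- For any prime p ≥ 5 and any positive integer r, the sum ∑_{n=0}^{rp-1} binomial(2n, n) is congruent to α_r modulo p if p ≡ 1 (mod 3), and congruent to -α_r modulo p if p ≡ 2 (mod 3), where α_r = ∑_{n=0}^{r-1} binomial(2n, n). -/
open Finset Nat

lemma lucas_step (p : ℕ) [Fact p.Prime] (a b c d : ℕ) (hb : b < p) (hd : d < p) :
    (((a * p + b).choose (c * p + d) : ℕ) : ZMod p) = (a.choose c) * (b.choose d) := by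
  have h := Choose.choose_modEq_choose_mod_mul_choose_div_nat (p := p) (n := a*p+b) (k := c*p+d)
  have hp : 0 < p := (Fact.out : p.Prime).pos
  have e1 : (a * p + b) % p = b := by
    rw [mul_comm, Nat.mul_add_mod]; exact Nat.mod_eq_of_lt hb
  have e2 : (c * p + d) % p = d := by
    rw [mul_comm, Nat.mul_add_mod]; exact Nat.mod_eq_of_lt hd
  have e3 : (a * p + b) / p = a := by
    rw [mul_comm, Nat.mul_add_div hp, Nat.div_eq_of_lt hb, Nat.add_zero]
  have e4 : (c * p + d) / p = c := by
    rw [mul_comm, Nat.mul_add_div hp, Nat.div_eq_of_lt hd, Nat.add_zero]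
  rw [e1, e2, e3, e4] at h
  rw [(ZMod.natCast_eq_natCast_iff _ _ _).mpr h]
  push_cast; ring

-- centralBinom k ≡ 0 mod p for p ≤ 2k, k < p
lemma cb_zero (p : ℕ) [Fact p.Prime] (k : ℕ) (hk : k < p) (h2k : p ≤ 2 * k) :
    ((Nat.centralBinom k : ℕ) : ZMod p) = 0 := by
  have : p ∣ Nat.centralBinom k := by
    have := (Fact.out : p.Prime).dvd_choose (a := k) (b := 2 * k) hk (by omega) h2k
    simpa [Nat.centralBinom] using this
  exact (ZMod.natCast_eq_zero_iff _ _).mpr this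

-- multiplicativity
lemma cb_mul (p : ℕ) [Fact p.Prime] (q k : ℕ) (hk : k < p) :
    ((Nat.centralBinom (q * p + k) : ℕ) : ZMod p)
      = (Nat.centralBinom q : ZMod p) * (Nat.centralBinom k : ZMod p) := by
  by_cases h : 2 * k < p
  · have : Nat.centralBinom (q * p + k) = ((2*q) * p + 2*k).choose (q * p + k) := by
      simp [Nat.centralBinom]; ring_nf
    rw [this, lucas_step p (2*q) (2*k) q k h hk]
    simp [Nat.centralBinom]
  · have h2 : 2 * k - p < p := by omega
    have : Nat.centralBinom (q * p + k) = ((2*q+1) * p + (2*k - p)).choose (q * p + k) := by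
      simp [Nat.centralBinom]; ring_nf; congr 1; omega
    rw [this]
    have : (q * p + k) = q * p + k := rfl
    rw [lucas_step p (2*q+1) (2*k-p) q k h2 hk]
    have hlt : 2 * k - p < k := by omega
    rw [Nat.choose_eq_zero_of_lt hlt, cb_zero p k hk (by omega)]
    simp

lemma cb_eq (p : ℕ) [Fact p.Prime] (hp5 : 5 ≤ p) :
    ∀ k, k ≤ p / 2 →
      ((Nat.centralBinom k : ℕ) : ZMod p) = (-4)^k * ((p/2).choose k : ZMod p) := by
  have hodd : p % 2 = 1 :=
    Nat.odd_iff.mp ((Fact.out : p.Prime).odd_of_ne_two (by omega))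
  set m := p / 2 with hm
  have hp2m : p = 2 * m + 1 := by omega
  have h2m : ((2 * m : ℕ) : ZMod p) = -1 := by
    have : ((2 * m + 1 : ℕ) : ZMod p) = 0 := by rw [← hp2m]; exact ZMod.natCast_self p
    push_cast at this ⊢; linear_combination this
  intro k
  induction k with
  | zero => intro _; simp [Nat.centralBinom]
  | succ k ih =>
    intro hk1
    have hk : k ≤ m := by omega
    have IH := ih hk
    -- nonzero factors
    have hne : ((k+1 : ℕ) : ZMod p) * 2 ≠ 0 := by
      have h1 : ((k+1 : ℕ) : ZMod p) ≠ 0 := by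
        rw [Ne, ZMod.natCast_eq_zero_iff]
        intro h
        have := Nat.le_of_dvd (by omega) h
        omega
      have h2 : (2 : ZMod p) ≠ 0 := by
        rw [show (2 : ZMod p) = ((2:ℕ) : ZMod p) by push_cast; ring, Ne,
          ZMod.natCast_eq_zero_iff]
        intro h
        have := Nat.le_of_dvd (by omega) h
        omega
      exact mul_ne_zero h1 h2
    have hrec : ((k+1 : ℕ) : ZMod p) * (Nat.centralBinom (k+1) : ZMod p)
        = 2 * (2 * k + 1) * (Nat.centralBinom k : ZMod p) := by
      have := Nat.succ_mul_centralBinom_succ k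
      have := congrArg (fun n : ℕ => (n : ZMod p)) this
      push_cast at this ⊢
      linear_combination this
    have hch : (m.choose (k+1) : ZMod p) * ((k+1 : ℕ) : ZMod p)
        = (m.choose k : ZMod p) * ((m - k : ℕ) : ZMod p) := by
      have := Nat.choose_succ_right_eq m k
      have := congrArg (fun n : ℕ => (n : ZMod p)) this
      push_cast at this ⊢
      linear_combination this
    have hmk : (2 : ZMod p) * ((m - k : ℕ) : ZMod p) = -(2 * k + 1) := by
      have hsub : ((m - k : ℕ) : ZMod p) = (m : ZMod p) - (k : ZMod p) := by
        push_cast [Nat.cast_sub hk]; ring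
      rw [hsub]
      push_cast at h2m
      linear_combination h2m
    -- main computation
    have key : ((k+1 : ℕ) : ZMod p) * 2 * ((Nat.centralBinom (k+1) : ℕ) : ZMod p)
        = ((k+1 : ℕ) : ZMod p) * 2 * ((-4)^(k+1) * ((m.choose (k+1) : ℕ) : ZMod p)) := by
      calc ((k+1 : ℕ) : ZMod p) * 2 * ((Nat.centralBinom (k+1) : ℕ) : ZMod p)
          = 2 * (((k+1 : ℕ) : ZMod p) * (Nat.centralBinom (k+1) : ZMod p)) := by ring
        _ = 2 * (2 * (2 * k + 1) * (Nat.centralBinom k : ZMod p)) := by rw [hrec]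
        _ = 4 * (2 * k + 1) * ((-4)^k * ((m.choose k : ℕ) : ZMod p)) := by rw [IH]; ring
        _ = (-4)^(k+1) * ((m.choose k : ZMod p) * (-(2 * k + 1))) := by ring
        _ = (-4)^(k+1) * ((m.choose k : ZMod p) * ((2 : ZMod p) * ((m - k : ℕ) : ZMod p))) := by
            rw [hmk]
        _ = 2 * ((m.choose (k+1) : ZMod p) * ((k+1 : ℕ) : ZMod p)) * (-4)^(k+1) := by
            rw [hch]; ring
        _ = ((k+1 : ℕ) : ZMod p) * 2 * ((-4)^(k+1) * ((m.choose (k+1) : ℕ) : ZMod p)) := by ring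
    exact mul_left_cancel₀ hne key

lemma sum_cb (p : ℕ) [Fact p.Prime] (hp5 : 5 ≤ p) :
    ∑ k ∈ Finset.range p, ((Nat.centralBinom k : ℕ) : ZMod p) = (-3 : ZMod p)^(p/2) := by
  have hodd : p % 2 = 1 :=
    Nat.odd_iff.mp ((Fact.out : p.Prime).odd_of_ne_two (by omega))
  set m := p / 2 with hm
  have hp2m : p = 2 * m + 1 := by omega
  have h1 : ∑ k ∈ Finset.range p, ((Nat.centralBinom k : ℕ) : ZMod p)
      = ∑ k ∈ Finset.range p, (-4 : ZMod p)^k * ((m.choose k : ℕ) : ZMod p) := by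
    apply Finset.sum_congr rfl
    intro k hk
    rw [Finset.mem_range] at hk
    by_cases h : k ≤ m
    · exact cb_eq p hp5 k h
    · rw [cb_zero p k hk (by omega), Nat.choose_eq_zero_of_lt (by omega)]
      simp
  rw [h1]
  rw [← Finset.sum_subset (Finset.range_subset_range.mpr (show m + 1 ≤ p by omega))
    (fun k _ hk => by
      rw [Finset.mem_range, not_lt] at hk
      rw [Nat.choose_eq_zero_of_lt (by omega)]; simp)]
  have := add_pow (-4 : ZMod p) 1 m
  norm_num at this
  rw [← this]

lemma two_not_sq_mod3 : ¬IsSquare (2 : ZMod 3) := by decide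

lemma neg_three_pow (p : ℕ) [Fact p.Prime] (hp5 : 5 ≤ p) :
    (p % 3 = 1 → (-3 : ZMod p)^(p/2) = 1) ∧ (p % 3 = 2 → (-3 : ZMod p)^(p/2) = -1) := by
  haveI : Fact (Nat.Prime 3) := ⟨by norm_num⟩
  have hp2 : p ≠ 2 := by omega
  have hodd : p % 2 = 1 :=
    Nat.odd_iff.mp ((Fact.out : p.Prime).odd_of_ne_two hp2)
  have h1 : legendreSym p (-3) = legendreSym p (-1) * legendreSym p 3 := by
    rw [← legendreSym.mul]; norm_num
  have h2 : legendreSym p (-1) = (-1)^(p/2) := by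
    rw [legendreSym.at_neg_one hp2, ZMod.χ₄_eq_neg_one_pow hodd]
  have h3 : legendreSym 3 (p : ℤ) = (-1)^(p/2) * legendreSym p 3 := by
    have := legendreSym.quadratic_reciprocity' (p := p) (q := 3) hp2 (by norm_num)
    simpa using this
  have h4 : legendreSym p (-3) = legendreSym 3 (p : ℤ) := by
    rw [h1, h2, h3]
  have hmod : legendreSym 3 (p : ℤ) = legendreSym 3 ((p % 3 : ℕ) : ℤ) := by
    rw [legendreSym.mod]
    norm_cast
  have hpow := legendreSym.eq_pow p (-3)
  have hcast : (((-3 : ℤ)) : ZMod p) = (-3 : ZMod p) := by push_cast; ring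
  constructor
  · intro h
    have : legendreSym 3 ((p % 3 : ℕ) : ℤ) = 1 := by
      rw [h]; simpa using legendreSym.at_one 3
    have hv : legendreSym p (-3) = 1 := by rw [h4, hmod, this]
    rw [hv] at hpow
    rw [← hcast, ← hpow]
    norm_num
  · intro h
    have : legendreSym 3 ((p % 3 : ℕ) : ℤ) = -1 := by
      rw [h]
      have h2sq : ¬IsSquare ((2 : ℤ) : ZMod 3) := by
        have e : ((2 : ℤ) : ZMod 3) = (2 : ZMod 3) := by norm_cast
        simpa [e] using two_not_sq_mod3
      have : legendreSym 3 (2 : ℤ) = -1 := (legendreSym.eq_neg_one_iff (p := 3)).mpr h2sq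
      simpa using this
    have hv : legendreSym p (-3) = -1 := by rw [h4, hmod, this]
    rw [hv] at hpow
    rw [← hcast, ← hpow]
    norm_num

lemma sum_split (p : ℕ) [Fact p.Prime] (r : ℕ) :
    (∑ n ∈ Finset.range (r * p), (Nat.centralBinom n : ZMod p))
      = (∑ q ∈ Finset.range r, (Nat.centralBinom q : ZMod p))
        * (∑ k ∈ Finset.range p, (Nat.centralBinom k : ZMod p)) := by
  induction r with
  | zero => simp
  | succ r ih =>
    rw [Nat.succ_mul, Finset.sum_range_add, ih, Finset.sum_range_succ, add_mul]
    congr 1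
    rw [Finset.mul_sum]
    apply Finset.sum_congr rfl
    intro k hk
    rw [Finset.mem_range] at hk
    exact cb_mul p r k hk

theorem sum_centralBinom_rp_mod_p (p : ℕ) (hp : p.Prime) (hp5 : 5 ≤ p)
    (r : ℕ) (hr : 0 < r) :
    (p % 3 = 1 → (∑ n ∈ Finset.range (r * p), (Nat.centralBinom n : ZMod p)) =
      ∑ n ∈ Finset.range r, (Nat.centralBinom n : ZMod p)) ∧
    (p % 3 = 2 → (∑ n ∈ Finset.range (r * p), (Nat.centralBinom n : ZMod p)) =
      -∑ n ∈ Finset.range r, (Nat.centralBinom n : ZMod p)) := by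
  haveI : Fact p.Prime := ⟨hp⟩
  rw [sum_split p r, sum_cb p hp5]
  obtain ⟨h1, h2⟩ := neg_three_pow p hp5
  constructor
  · intro h; rw [h1 h, mul_one]
  · intro h; rw [h2 h, mul_neg_one]
end

section
/- For any prime p ≥ 5 and any positive integers r and s, the double sum ∑_{n=0}^{rp-1} ∑_{m=0}^{sp-1} binomial(n+m, m)^2 is congruent to ε_{rs} modulo p if p ≡ 1 (mod 3), and congruent to -ε_{rs} modulo p if p ≡ 2 (mod 3), where ε_{rs} = ∑_{n=0}^{r-1} ∑_{m=0}^{s-1} binomial(n+m, m)^2. -/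
open Finset

private lemma lucasZ' (p : ℕ) [Fact p.Prime] (n k : ℕ) :
    ((n.choose k : ℕ) : ZMod p) = ((n / p).choose (k / p) : ZMod p) * ((n % p).choose (k % p)) := by
  have h := Choose.choose_modEq_choose_mod_mul_choose_div_nat (p := p) (n := n) (k := k)
  have := (ZMod.natCast_eq_natCast_iff _ _ _).mpr h
  push_cast at this
  rw [this, mul_comm]

private lemma sumRangeMul' {M : Type*} [AddCommMonoid M] (f : ℕ → M) (r q : ℕ) :
    ∑ n ∈ range (r * q), f n = ∑ a ∈ range r, ∑ b ∈ range q, f (a * q + b) := by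
  induction r with
  | zero => simp
  | succ r ih =>
      rw [Nat.succ_mul, Finset.sum_range_add, ih, Finset.sum_range_succ]

private lemma pointLemma' (p : ℕ) [Fact p.Prime] (a b n0 m0 : ℕ) (hn0 : n0 < p) (hm0 : m0 < p) :
    ((((a * p + n0) + (b * p + m0)).choose (b * p + m0) : ℕ) : ZMod p) ^ 2
    = (((a + b).choose b : ℕ) : ZMod p) ^ 2 *
      (if n0 + m0 < p then (((n0 + m0).choose m0 : ℕ) : ZMod p) ^ 2 else 0) := by
  have hp0 : 0 < p := lt_of_le_of_lt (Nat.zero_le _) hn0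
  have hM : b * p + m0 = m0 + b * p := by ring
  have hN : (a * p + n0) + (b * p + m0) = (n0 + m0) + (a + b) * p := by ring
  rw [lucasZ', hN, hM, Nat.add_mul_div_right _ _ hp0, Nat.add_mul_div_right _ _ hp0,
    Nat.add_mul_mod_self_right, Nat.add_mul_mod_self_right,
    Nat.div_eq_of_lt hm0, Nat.mod_eq_of_lt hm0]
  by_cases hlt : n0 + m0 < p
  · rw [if_pos hlt, Nat.div_eq_of_lt hlt, Nat.mod_eq_of_lt hlt, mul_pow]
    simp
  · rw [if_neg hlt]
    push_neg at hlt
    have h2 : (n0 + m0) % p = n0 + m0 - p := by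
      rw [Nat.mod_eq_sub_mod hlt, Nat.mod_eq_of_lt (by omega)]
    have h3 : (n0 + m0 - p).choose m0 = 0 := Nat.choose_eq_zero_of_lt (by omega)
    rw [h2, h3]
    simp

private lemma centralBinom_cast' (p : ℕ) [Fact p.Prime] (hp2 : p % 2 = 1) (k : ℕ) (hk : k ≤ p / 2) :
    ((Nat.centralBinom k : ℕ) : ZMod p) = (-4) ^ k * (((p / 2).choose k : ℕ) : ZMod p) := by
  have hp0 : 0 < p := (Fact.out : p.Prime).pos
  have hHm : ((2 * (p / 2) : ℕ) : ZMod p) = -1 := by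
    have h1 : 2 * (p / 2) = p - 1 := by omega
    have h2 : ((p - 1 : ℕ) : ZMod p) = -1 := by
      have : ((p - 1 : ℕ) : ZMod p) + 1 = ((p : ℕ) : ZMod p) := by
        rw [← Nat.cast_succ]; congr 1; omega
      rw [ZMod.natCast_self] at this
      exact eq_neg_of_add_eq_zero_left this
    rw [h1, h2]
  induction k with
  | zero => simp [Nat.centralBinom]
  | succ k ih =>
      have hk' : k ≤ p / 2 := by omega
      have hkp : k + 1 < p := by omega
      have hne : ((k : ZMod p) + 1) ≠ 0 := by
        have h9 : (((k + 1 : ℕ)) : ZMod p) ≠ 0 := by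
          intro h0
          rw [ZMod.natCast_eq_zero_iff] at h0
          exact absurd (Nat.le_of_dvd (by omega) h0) (by omega)
        push_cast at h9; exact h9
      apply mul_left_cancel₀ hne
      have hrec := Nat.succ_mul_centralBinom_succ k
      have hrecZ : ((k : ZMod p) + 1) * (Nat.centralBinom (k + 1) : ZMod p)
          = 2 * (2 * (k : ZMod p) + 1) * (Nat.centralBinom k : ZMod p) := by
        have := congrArg (fun n : ℕ => (n : ZMod p)) hrec
        push_cast at this
        convert this using 2 <;> ring
      rw [hrecZ, ih hk']
      have hch := Nat.choose_succ_right_eq (p / 2) k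
      have hchZ : (((p / 2).choose (k+1) : ℕ) : ZMod p) * ((k : ZMod p) + 1)
          = (((p / 2).choose k : ℕ) : ZMod p) * (((p/2 : ℕ) : ZMod p) - (k : ZMod p)) := by
        have := congrArg (fun n : ℕ => (n : ZMod p)) hch
        push_cast [Nat.cast_sub hk'] at this
        convert this using 2
      have hH : (2 : ZMod p) * ((p / 2 : ℕ) : ZMod p) = -1 := by
        push_cast at hHm; exact hHm
      rw [pow_succ]
      linear_combination (4 * (-4 : ZMod p)^k) * hchZ
        + (2 * (-4 : ZMod p)^k * (((p / 2).choose k : ℕ) : ZMod p)) * hH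

private lemma centralBinom_zero' (p : ℕ) [Fact p.Prime] (k : ℕ) (h1 : p / 2 < k) (h2 : k < p) :
    ((Nat.centralBinom k : ℕ) : ZMod p) = 0 := by
  have hp2 : 2 ≤ p := (Fact.out : p.Prime).two_le
  rw [Nat.centralBinom, lucasZ', Nat.div_eq_of_lt h2, Nat.mod_eq_of_lt h2]
  have hd : 2 * k / p = 1 := by
    rw [Nat.div_eq_of_lt_le] <;> omega
  have hm : 2 * k % p = 2 * k - p := by
    rw [Nat.mod_eq_sub_mod (by omega), Nat.mod_eq_of_lt (by omega)]
  rw [hd, hm, Nat.choose_eq_zero_of_lt (show 2 * k - p < k by omega)]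
  simp

private lemma sum_centralBinom' (p : ℕ) [Fact p.Prime] (hp2 : p % 2 = 1) :
    ∑ k ∈ range p, ((Nat.centralBinom k : ℕ) : ZMod p) = (-3 : ZMod p) ^ (p / 2) := by
  have hp0 : 0 < p := (Fact.out : p.Prime).pos
  have hsplit : range p = Finset.Ico 0 (p / 2 + 1) ∪ Finset.Ico (p / 2 + 1) p := by
    rw [Finset.range_eq_Ico, Finset.Ico_union_Ico_eq_Ico] <;> omega
  rw [hsplit, Finset.sum_union (by
    apply Finset.Ico_disjoint_Ico_consecutive)]
  have h2 : ∑ k ∈ Finset.Ico (p / 2 + 1) p, ((Nat.centralBinom k : ℕ) : ZMod p) = 0 := by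
    apply Finset.sum_eq_zero
    intro k hk
    rw [Finset.mem_Ico] at hk
    exact centralBinom_zero' p k (by omega) hk.2
  rw [h2, add_zero, ← Finset.range_eq_Ico]
  have h1 : ∑ k ∈ range (p / 2 + 1), ((Nat.centralBinom k : ℕ) : ZMod p)
      = ∑ k ∈ range (p / 2 + 1), (-4 : ZMod p) ^ k * (((p / 2).choose k : ℕ) : ZMod p) := by
    apply Finset.sum_congr rfl
    intro k hk
    exact centralBinom_cast' p hp2 k (by simpa [Nat.lt_succ_iff] using hk)
  rw [h1]
  have := add_pow (-4 : ZMod p) 1 (p / 2)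
  norm_num at this
  rw [← this]

private lemma tri_sum' (p : ℕ) :
    ∑ n0 ∈ range p, ∑ m0 ∈ range p,
        (if n0 + m0 < p then (((n0 + m0).choose m0 : ℕ) : ZMod p) ^ 2 else 0)
    = ∑ k ∈ range p, ((Nat.centralBinom k : ℕ) : ZMod p) := by
  have hcb : ∀ k, ((Nat.centralBinom k : ℕ) : ZMod p)
      = ∑ ij ∈ Finset.HasAntidiagonal.antidiagonal k, (((ij.1 + ij.2).choose ij.2 : ℕ) : ZMod p) ^ 2 := by
    intro k
    have h1 : Nat.centralBinom k = ∑ ij ∈ Finset.HasAntidiagonal.antidiagonal k, k.choose ij.1 * k.choose ij.2 := by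
      rw [Nat.centralBinom, two_mul, Nat.add_choose_eq]
    rw [h1]
    push_cast
    apply Finset.sum_congr rfl
    intro ij hij
    rw [Finset.HasAntidiagonal.mem_antidiagonal] at hij
    have h2 : ij.1 + ij.2 = k := hij
    have h3 : k.choose ij.1 = k.choose ij.2 := by
      rw [← Nat.choose_symm (show ij.1 ≤ k by omega)]
      congr 1
      omega
    rw [h3, ← h2]
    ring
  rw [Finset.sum_congr rfl (fun k _ => hcb k)]
  have hsig : ∑ x ∈ (range p).sigma (fun k => Finset.HasAntidiagonal.antidiagonal k),
      (((x.2.1 + x.2.2).choose x.2.2 : ℕ) : ZMod p) ^ 2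
      = ∑ k ∈ range p, ∑ ij ∈ Finset.HasAntidiagonal.antidiagonal k,
        (((ij.1 + ij.2).choose ij.2 : ℕ) : ZMod p) ^ 2 := Finset.sum_sigma _ _ _
  rw [← hsig]
  rw [← Finset.sum_product']
  rw [show (∑ x ∈ range p ×ˢ range p,
      (if x.1 + x.2 < p then (((x.1 + x.2).choose x.2 : ℕ) : ZMod p) ^ 2 else 0))
    = ∑ x ∈ (range p ×ˢ range p).filter (fun x => x.1 + x.2 < p),
        (((x.1 + x.2).choose x.2 : ℕ) : ZMod p) ^ 2 from (Finset.sum_filter _ _).symm]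
  apply Finset.sum_nbij' (fun x => (⟨x.1 + x.2, x⟩ : Σ _ : ℕ, ℕ × ℕ))
      (fun i => i.2)
  · intro x hx
    simp only [Finset.mem_filter, Finset.mem_product, Finset.mem_range] at hx
    simp only [Finset.mem_sigma, Finset.mem_range, Finset.HasAntidiagonal.mem_antidiagonal]
    exact ⟨hx.2, trivial⟩
  · intro i hi
    simp only [Finset.mem_sigma, Finset.mem_range, Finset.HasAntidiagonal.mem_antidiagonal] at hi
    simp only [Finset.mem_filter, Finset.mem_product, Finset.mem_range]
    omega
  · intro x hx
    rfl
  · intro i hi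
    simp only [Finset.mem_sigma, Finset.mem_range, Finset.HasAntidiagonal.mem_antidiagonal] at hi
    obtain ⟨k, a, b⟩ := i
    simp only at hi ⊢
    obtain ⟨hk, hab⟩ := hi
    subst hab
    rfl
  · intro x hx
    rfl

private lemma natne' (p : ℕ) [Fact p.Prime] (a : ℕ) (ha : 0 < a) (hap : a < p) :
    ((a : ℕ) : ZMod p) ≠ 0 := by
  intro h
  rw [ZMod.natCast_eq_zero_iff] at h
  exact absurd (Nat.le_of_dvd ha h) (by omega)

private lemma neg_three_pow_one' (p : ℕ) [Fact p.Prime] (hp5 : 5 ≤ p) (h1 : p % 3 = 1) :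
    (-3 : ZMod p) ^ (p / 2) = 1 := by
  have hp : p.Prime := Fact.out
  have h3 : (3 : ZMod p) ≠ 0 := by
    have := natne' p 3 (by norm_num) (by omega); simpa using this
  obtain ⟨g, hg⟩ := IsCyclic.exists_generator (α := (ZMod p)ˣ)
  have hcard : Fintype.card (ZMod p)ˣ = p - 1 := ZMod.card_units p
  have horder : orderOf g = p - 1 := by
    rw [orderOf_eq_card_of_forall_mem_zpowers hg, Nat.card_eq_fintype_card, hcard]
  have hdvd : 3 * ((p - 1) / 3) = p - 1 := by omega
  set u := g ^ ((p - 1) / 3) with hu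
  have hu3 : u ^ 3 = 1 := by
    rw [hu, ← pow_mul, mul_comm, hdvd, ← hcard, pow_card_eq_one]
  have hune : u ≠ 1 := by
    intro h
    have : orderOf g ∣ (p - 1) / 3 := orderOf_dvd_of_pow_eq_one h
    rw [horder] at this
    have := Nat.le_of_dvd (by omega) this
    omega
  set w : ZMod p := (u : ZMod p) with hwdef
  have hw3 : w ^ 3 = 1 := by
    rw [hwdef, ← Units.val_pow_eq_pow_val, hu3, Units.val_one]
  have hwne : w ≠ 1 := by
    intro h
    exact hune (Units.ext (by simpa [hwdef] using h))
  have hw : w ^ 2 + w + 1 = 0 := by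
    have hfac : (w - 1) * (w ^ 2 + w + 1) = 0 := by
      linear_combination hw3
    rcases mul_eq_zero.mp hfac with h | h
    · exact absurd (by linear_combination h) hwne
    · exact h
  have hsq : (2 * w + 1) ^ 2 = -3 := by linear_combination 4 * hw
  have hne0 : 2 * w + 1 ≠ 0 := by
    intro h
    apply h3
    linear_combination 4 * hw - (2 * w + 1) * h
  calc (-3 : ZMod p) ^ (p / 2) = ((2 * w + 1) ^ 2) ^ (p / 2) := by rw [hsq]
    _ = (2 * w + 1) ^ (2 * (p / 2)) := by rw [← pow_mul]
    _ = (2 * w + 1) ^ (p - 1) := by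
        congr 1
        have := hp.two_le
        have : p % 2 = 1 := Nat.Prime.eq_two_or_odd hp |>.resolve_left (by omega)
        omega
    _ = 1 := ZMod.pow_card_sub_one_eq_one hne0

private lemma neg_three_pow_two' (p : ℕ) [Fact p.Prime] (hp5 : 5 ≤ p) (h2 : p % 3 = 2) :
    (-3 : ZMod p) ^ (p / 2) = -1 := by
  have hp : p.Prime := Fact.out
  have h3 : (3 : ZMod p) ≠ 0 := by
    have := natne' p 3 (by norm_num) (by omega); simpa using this
  have hn3 : (-3 : ZMod p) ≠ 0 := by simpa using h3
  have hns : ¬ IsSquare (-3 : ZMod p) := by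
    rintro ⟨x, hx⟩
    have h2' : (2 : ZMod p) ≠ 0 := by
      have := natne' p 2 (by norm_num) (by omega); simpa using this
    set w : ZMod p := (x - 1) * (2 : ZMod p)⁻¹ with hwdef
    have hw2 : w * 2 = x - 1 := by
      rw [hwdef, mul_assoc, inv_mul_cancel₀ h2', mul_one]
    have h4 : (4 : ZMod p) ≠ 0 := by
      have h4' : (2 : ZMod p) * 2 = 4 := by norm_num
      intro h; apply h2'; rcases mul_eq_zero.mp (h4' ▸ h) with h | h <;> exact h
    have hw : w ^ 2 + w + 1 = 0 := by
      have hkey : (4 : ZMod p) * (w ^ 2 + w + 1) = 0 := by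
        linear_combination (w * 2 + x + 1) * hw2 - hx
      rcases mul_eq_zero.mp hkey with h | h
      · exact absurd h h4
      · exact h
    have hwne1 : w ≠ 1 := by
      intro h
      apply h3
      rw [h] at hw
      linear_combination hw
    have hwne0 : w ≠ 0 := by
      intro h
      rw [h] at hw
      norm_num at hw
    have hw3 : w ^ 3 = 1 := by linear_combination (w - 1) * hw
    have hord : orderOf w = 3 := by
      have hdvd : orderOf w ∣ 3 := orderOf_dvd_of_pow_eq_one hw3
      rcases (Nat.Prime.eq_one_or_self_of_dvd (by norm_num) _ hdvd) with h | h
      · exact absurd (orderOf_eq_one_iff.mp h) hwne1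
      · exact h
    have hpm : w ^ (p - 1) = 1 := ZMod.pow_card_sub_one_eq_one hwne0
    have : (3 : ℕ) ∣ p - 1 := hord ▸ orderOf_dvd_of_pow_eq_one hpm
    omega
  rcases ZMod.pow_div_two_eq_neg_one_or_one p hn3 with h | h
  · exact absurd ((ZMod.euler_criterion p hn3).mpr h) hns
  · exact h

theorem double_sum_choose_sq_rp_sp_mod_p (p : ℕ) (hp : p.Prime) (hp5 : 5 ≤ p)
    (r s : ℕ) (hr : 0 < r) (hs : 0 < s) :
    (p % 3 = 1 → (∑ n ∈ Finset.range (r * p), ∑ m ∈ Finset.range (s * p),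
      ((n + m).choose m : ZMod p) ^ 2) =
      ∑ n ∈ Finset.range r, ∑ m ∈ Finset.range s, ((n + m).choose m : ZMod p) ^ 2) ∧
    (p % 3 = 2 → (∑ n ∈ Finset.range (r * p), ∑ m ∈ Finset.range (s * p),
      ((n + m).choose m : ZMod p) ^ 2) =
      -∑ n ∈ Finset.range r, ∑ m ∈ Finset.range s, ((n + m).choose m : ZMod p) ^ 2) := by
  haveI : Fact p.Prime := ⟨hp⟩
  have hp2 : p % 2 = 1 := (Nat.Prime.eq_two_or_odd hp).resolve_left (by omega)
  have key : (∑ n ∈ Finset.range (r * p), ∑ m ∈ Finset.range (s * p),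
      ((n + m).choose m : ZMod p) ^ 2)
      = (∑ n ∈ Finset.range r, ∑ m ∈ Finset.range s, ((n + m).choose m : ZMod p) ^ 2)
        * (-3 : ZMod p) ^ (p / 2) := by
    calc (∑ n ∈ Finset.range (r * p), ∑ m ∈ Finset.range (s * p),
          ((n + m).choose m : ZMod p) ^ 2)
        = ∑ a ∈ range r, ∑ n0 ∈ range p, ∑ b ∈ range s, ∑ m0 ∈ range p,
            ((((a * p + n0) + (b * p + m0)).choose (b * p + m0) : ℕ) : ZMod p) ^ 2 := by
          rw [sumRangeMul' _ r p]
          exact Finset.sum_congr rfl fun a _ => Finset.sum_congr rfl fun n0 _ => by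
            rw [sumRangeMul' _ s p]
      _ = ∑ a ∈ range r, ∑ n0 ∈ range p, ∑ b ∈ range s, ∑ m0 ∈ range p,
            (((a + b).choose b : ℕ) : ZMod p) ^ 2 *
              (if n0 + m0 < p then (((n0 + m0).choose m0 : ℕ) : ZMod p) ^ 2 else 0) := by
          refine Finset.sum_congr rfl fun a _ => Finset.sum_congr rfl fun n0 hn0 =>
            Finset.sum_congr rfl fun b _ => Finset.sum_congr rfl fun m0 hm0 => ?_
          exact pointLemma' p a b n0 m0 (Finset.mem_range.mp hn0) (Finset.mem_range.mp hm0)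
      _ = ∑ a ∈ range r, ∑ b ∈ range s, ∑ n0 ∈ range p, ∑ m0 ∈ range p,
            (((a + b).choose b : ℕ) : ZMod p) ^ 2 *
              (if n0 + m0 < p then (((n0 + m0).choose m0 : ℕ) : ZMod p) ^ 2 else 0) := by
          exact Finset.sum_congr rfl fun a _ => Finset.sum_comm
      _ = ∑ a ∈ range r, ∑ b ∈ range s, (((a + b).choose b : ℕ) : ZMod p) ^ 2 *
            ∑ n0 ∈ range p, ∑ m0 ∈ range p,
              (if n0 + m0 < p then (((n0 + m0).choose m0 : ℕ) : ZMod p) ^ 2 else 0) := by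
          simp only [← Finset.mul_sum]
      _ = (∑ a ∈ range r, ∑ b ∈ range s, (((a + b).choose b : ℕ) : ZMod p) ^ 2) *
            (∑ n0 ∈ range p, ∑ m0 ∈ range p,
              (if n0 + m0 < p then (((n0 + m0).choose m0 : ℕ) : ZMod p) ^ 2 else 0)) := by
          simp only [← Finset.sum_mul]
      _ = (∑ n ∈ Finset.range r, ∑ m ∈ Finset.range s, ((n + m).choose m : ZMod p) ^ 2)
            * (-3 : ZMod p) ^ (p / 2) := by
          rw [tri_sum' p, sum_centralBinom' p hp2]
  constructor
  · intro h1
    rw [key, neg_three_pow_one' p hp5 h1, mul_one]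
  · intro h2
    rw [key, neg_three_pow_two' p hp5 h2, mul_neg_one]
end

section
/- For any prime p ≥ 3 and any positive integers r, s, t, the triple sum ∑_{m1=0}^{rp-1} ∑_{m2=0}^{sp-1} ∑_{m3=0}^{tp-1} (m1+m2+m3)! / (m1! · m2! · m3!) is congruent modulo p to κ_{rst} = ∑_{m1=0}^{r-1} ∑_{m2=0}^{s-1} ∑_{m3=0}^{t-1} (m1+m2+m3)! / (m1! · m2! · m3!). -/
open Finset

variable {p : ℕ} [Fact p.Prime]

lemma lucas1 (n k : ℕ) : ((n.choose k : ZMod p)) =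
    ((n % p).choose (k % p) : ZMod p) * ((n / p).choose (k / p)) := by
  have h := Choose.choose_modEq_choose_mod_mul_choose_div_nat (p := p) (n := n) (k := k)
  have := (ZMod.natCast_eq_natCast_iff _ _ _).mpr h
  push_cast at this
  exact this

lemma lucas2 {a c : ℕ} {b d : ℕ} (hb : b < p) (hd : d < p) :
    (((a * p + b).choose (c * p + d) : ZMod p)) = (a.choose c : ZMod p) * (b.choose d) := by
  have hp : 0 < p := hb.trans_le' (Nat.zero_le _)
  have h1 : (a * p + b) % p = b := by rw [mul_comm, Nat.mul_add_mod, Nat.mod_eq_of_lt hb]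
  have h2 : (c * p + d) % p = d := by rw [mul_comm, Nat.mul_add_mod, Nat.mod_eq_of_lt hd]
  have h3 : (a * p + b) / p = a := by
    rw [mul_comm, Nat.mul_add_div hp, Nat.div_eq_of_lt hb, add_zero]
  have h4 : (c * p + d) / p = c := by
    rw [mul_comm, Nat.mul_add_div hp, Nat.div_eq_of_lt hd, add_zero]
  rw [lucas1, h1, h2, h3, h4, mul_comm]

lemma mult3 (x y z : ℕ) :
    Nat.multinomial Finset.univ ![x, y, z] = (x + y + z).choose x * (y + z).choose y := by
  have huniv : (Finset.univ : Finset (Fin 3)) = insert 0 (insert 1 {2}) := by decide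
  rw [huniv, Nat.multinomial_insert (by decide), Nat.multinomial_insert (by decide),
    Nat.multinomial_singleton]
  simp [Finset.sum_insert, add_assoc]

lemma mult3' (x y z : ℕ) :
    Nat.multinomial Finset.univ ![x, y, z] = (x + y + z).choose z * (x + y).choose y := by
  have huniv : (Finset.univ : Finset (Fin 3)) = insert 2 (insert 1 {0}) := by decide
  rw [huniv, Nat.multinomial_insert (by decide), Nat.multinomial_insert (by decide),
    Nat.multinomial_singleton]
  simp [Finset.sum_insert]
  ring_nf

lemma mult_carry_zero {b1 b2 b3 : ℕ} (h1 : b1 < p) (h2 : b2 < p) (h3 : b3 < p)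
    (h : p ≤ b1 + b2 + b3) : (Nat.multinomial Finset.univ ![b1, b2, b3] : ZMod p) = 0 := by
  have hp := (Fact.out : p.Prime)
  rw [ZMod.natCast_eq_zero_iff]
  have hspec := Nat.multinomial_spec Finset.univ ![b1, b2, b3]
  have hsum : (∑ i : Fin 3, ![b1, b2, b3] i) = b1 + b2 + b3 := by
    simp [Fin.sum_univ_three]
  have hdvd : p ∣ (b1 + b2 + b3).factorial := Nat.dvd_factorial hp.pos h
  rw [hsum] at hspec
  rw [← hspec] at hdvd
  rcases (Nat.Prime.dvd_mul hp).mp hdvd with h' | h'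
  · exfalso
    rw [Fin.prod_univ_three] at h'
    simp only [Matrix.cons_val_zero, Matrix.cons_val_one, Matrix.head_cons,
      Matrix.cons_val_two, Matrix.tail_cons] at h'
    rcases (Nat.Prime.dvd_mul hp).mp h' with h'' | h''
    · rcases (Nat.Prime.dvd_mul hp).mp h'' with h3' | h3'
      · exact absurd ((Nat.Prime.dvd_factorial hp).mp h3') (by omega)
      · exact absurd ((Nat.Prime.dvd_factorial hp).mp h3') (by omega)
    · exact absurd ((Nat.Prime.dvd_factorial hp).mp h'') (by omega)
  · exact h'

lemma mult_lucas {a1 a2 a3 b1 b2 b3 : ℕ} (h1 : b1 < p) (h2 : b2 < p) (h3 : b3 < p) :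
    (Nat.multinomial Finset.univ ![a1 * p + b1, a2 * p + b2, a3 * p + b3] : ZMod p) =
      (Nat.multinomial Finset.univ ![a1, a2, a3] : ZMod p) *
      (Nat.multinomial Finset.univ ![b1, b2, b3] : ZMod p) := by
  have hp : 0 < p := h1.trans_le' (Nat.zero_le _)
  by_cases hc : b1 + b2 + b3 < p
  · rw [mult3, mult3, mult3]
    have e1 : a1 * p + b1 + (a2 * p + b2) + (a3 * p + b3)
        = (a1 + a2 + a3) * p + (b1 + b2 + b3) := by ring
    have e2 : a2 * p + b2 + (a3 * p + b3) = (a2 + a3) * p + (b2 + b3) := by ring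
    rw [e1, e2]
    push_cast
    rw [lucas2 (by omega) h1, lucas2 (by omega) h2]
    ring
  · rw [mult_carry_zero h1 h2 h3 (by omega), mul_zero]
    by_cases hc2 : b2 + b3 < p
    · -- carry at top level
      rw [mult3]
      have hq : b1 + b2 + b3 = p + (b1 + b2 + b3 - p) := by omega
      have e1 : a1 * p + b1 + (a2 * p + b2) + (a3 * p + b3)
          = (a1 + a2 + a3 + 1) * p + (b1 + b2 + b3 - p) := by
        calc a1 * p + b1 + (a2 * p + b2) + (a3 * p + b3)
            = (a1 + a2 + a3) * p + (b1 + b2 + b3) := by ring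
          _ = (a1 + a2 + a3 + 1) * p + (b1 + b2 + b3 - p) := by rw [hq, Nat.add_sub_cancel_left]; ring
      rw [e1]
      have hlt : b1 + b2 + b3 - p < p := by omega
      have hb1 : a1 * p + b1 = a1 * p + b1 := rfl
      push_cast
      rw [lucas2 hlt h1, Nat.choose_eq_zero_of_lt (show b1 + b2 + b3 - p < b1 by omega)]
      push_cast
      ring
    · -- carry in b2 + b3
      rw [mult3]
      have hq : b2 + b3 = p + (b2 + b3 - p) := by omega
      have e2 : a2 * p + b2 + (a3 * p + b3) = (a2 + a3 + 1) * p + (b2 + b3 - p) := by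
        calc a2 * p + b2 + (a3 * p + b3) = (a2 + a3) * p + (b2 + b3) := by ring
          _ = (a2 + a3 + 1) * p + (b2 + b3 - p) := by rw [hq, Nat.add_sub_cancel_left]; ring
      rw [e2]
      have hlt : b2 + b3 - p < p := by omega
      push_cast
      rw [lucas2 hlt h2, Nat.choose_eq_zero_of_lt (show b2 + b3 - p < b2 by omega)]
      push_cast
      ring

lemma hockey (m : ℕ) : ∀ K : ℕ, ∑ j ∈ Finset.range K, (m + j).choose j = (m + K).choose (m + 1)
  | 0 => by simp [Nat.choose_eq_zero_of_lt]
  | (K + 1) => by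
    rw [Finset.sum_range_succ, hockey m K]
    have h1 : (m + K).choose K = (m + K).choose m := by
      rw [add_comm m K]; exact Nat.choose_symm_add
    have h2 : m + (K + 1) = (m + K) + 1 := by omega
    rw [h1, h2, Nat.choose_succ_succ' (m + K) m]
    omega

lemma innerSumP (m : ℕ) (hm : m < 2 * p - 1) :
    (∑ j ∈ Finset.range p, ((m + j).choose j : ZMod p)) = if m = p - 1 then 1 else 0 := by
  have hp := (Fact.out : p.Prime)
  have hp2 : 2 ≤ p := hp.two_le
  rw [← Nat.cast_sum, hockey]
  rcases Nat.lt_or_ge m p with hmp | hmp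
  · -- m < p : m + p = 1 * p + m, m + 1 = 0 * p + (m+1) if m < p-1, else (1)*p+0
    by_cases he : m = p - 1
    · have e1 : m + p = 1 * p + m := by omega
      have e2 : m + 1 = 1 * p + 0 := by omega
      rw [e1, e2, lucas2 (by omega) (by omega)]
      simp [he]
    · have e1 : m + p = 1 * p + m := by omega
      have e2 : m + 1 = 0 * p + (m + 1) := by omega
      rw [e1, e2, lucas2 (by omega) (by omega),
        Nat.choose_eq_zero_of_lt (Nat.lt_succ_self m)]
      simp [he]
  · -- p ≤ m < 2p - 1, so m = p + e with e < p - 1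
    have he : m - p < p - 1 := by omega
    have hne : ¬ m = p - 1 := by omega
    have e1 : m + p = 2 * p + (m - p) := by omega
    have e2 : m + 1 = 1 * p + (m - p + 1) := by omega
    rw [e1, e2, lucas2 (by omega) (by omega),
      Nat.choose_eq_zero_of_lt (Nat.lt_succ_self (m - p))]
    simp [hne]

lemma box_sum_eq_one (hp3 : 3 ≤ p) :
    (∑ b1 ∈ Finset.range p, ∑ b2 ∈ Finset.range p, ∑ b3 ∈ Finset.range p,
      (Nat.multinomial Finset.univ ![b1, b2, b3] : ZMod p)) = 1 := by
  have hp := (Fact.out : p.Prime)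
  have step1 : ∀ b1 ∈ Finset.range p, ∀ b2 ∈ Finset.range p,
      (∑ b3 ∈ Finset.range p, (Nat.multinomial Finset.univ ![b1, b2, b3] : ZMod p)) =
      if b1 + b2 = p - 1 then ((b1 + b2).choose b2 : ZMod p) else 0 := by
    intro b1 hb1 b2 hb2
    rw [Finset.mem_range] at hb1 hb2
    have : ∀ b3, (Nat.multinomial Finset.univ ![b1, b2, b3] : ZMod p) =
        ((b1 + b2).choose b2 : ZMod p) * ((b1 + b2 + b3).choose b3 : ZMod p) := by
      intro b3
      rw [mult3']
      push_cast
      ring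
    have hinner := innerSumP (p := p) (b1 + b2) (by omega)
    simp_rw [this, ← Finset.mul_sum, hinner]
    split_ifs
    · rw [mul_one]
    · rw [mul_zero]
  rw [Finset.sum_congr rfl (fun b1 hb1 => Finset.sum_congr rfl (step1 b1 hb1))]
  have step2 : ∀ b1 ∈ Finset.range p,
      (∑ b2 ∈ Finset.range p, if b1 + b2 = p - 1 then ((b1 + b2).choose b2 : ZMod p) else 0) =
      ((p - 1).choose (p - 1 - b1) : ZMod p) := by
    intro b1 hb1
    rw [Finset.mem_range] at hb1
    rw [Finset.sum_eq_single (p - 1 - b1)]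
    · rw [if_pos (by omega)]
      have he : b1 + (p - 1 - b1) = p - 1 := by omega
      rw [he]
    · intro b hb hne
      rw [Finset.mem_range] at hb
      rw [if_neg (by omega)]
    · intro h
      exact absurd (Finset.mem_range.mpr (by omega)) h
  rw [Finset.sum_congr rfl step2, ← Nat.cast_sum]
  have : (∑ b1 ∈ Finset.range p, (p - 1).choose (p - 1 - b1)) = 2 ^ (p - 1) := by
    rw [← Nat.sum_range_choose (p - 1)]
    have hr : p = (p - 1) + 1 := by omega
    rw [hr]
    exact Finset.sum_range_reflect (fun i => (p - 1).choose i) (p - 1 + 1)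
  rw [this]
  push_cast
  exact ZMod.pow_card_sub_one_eq_one (by
    intro h
    have := (ZMod.natCast_eq_zero_iff 2 p).mp (by exact_mod_cast h)
    have := Nat.le_of_dvd (by norm_num) this
    omega)

lemma sum_range_mul' {M : Type*} [AddCommMonoid M] (f : ℕ → M) (q : ℕ) :
    ∀ r : ℕ, ∑ m ∈ Finset.range (r * q), f m
      = ∑ a ∈ Finset.range r, ∑ b ∈ Finset.range q, f (a * q + b)
  | 0 => by simp
  | (r + 1) => by
    have h : (r + 1) * q = r * q + q := by ring
    rw [h, Finset.sum_range_add, sum_range_mul' f q r, Finset.sum_range_succ]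

theorem triple_sum_multinomial_rp_sp_tp_mod_p (p : ℕ) (hp : p.Prime) (hp3 : 3 ≤ p)
    (r s t : ℕ) (hr : 0 < r) (hs : 0 < s) (ht : 0 < t) :
    (∑ m1 ∈ Finset.range (r * p), ∑ m2 ∈ Finset.range (s * p), ∑ m3 ∈ Finset.range (t * p),
      (Nat.multinomial Finset.univ ![m1, m2, m3] : ZMod p)) =
    ∑ m1 ∈ Finset.range r, ∑ m2 ∈ Finset.range s, ∑ m3 ∈ Finset.range t,
      (Nat.multinomial Finset.univ ![m1, m2, m3] : ZMod p) := by
  haveI : Fact p.Prime := ⟨hp⟩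
  have hp0 : 0 < p := hp.pos
  calc
    (∑ m1 ∈ Finset.range (r * p), ∑ m2 ∈ Finset.range (s * p), ∑ m3 ∈ Finset.range (t * p),
      (Nat.multinomial Finset.univ ![m1, m2, m3] : ZMod p))
      = ∑ a1 ∈ Finset.range r, ∑ b1 ∈ Finset.range p,
        ∑ a2 ∈ Finset.range s, ∑ b2 ∈ Finset.range p,
        ∑ a3 ∈ Finset.range t, ∑ b3 ∈ Finset.range p,
        (Nat.multinomial Finset.univ ![a1 * p + b1, a2 * p + b2, a3 * p + b3] : ZMod p) := by
      rw [sum_range_mul' _ p r]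
      refine Finset.sum_congr rfl fun a1 _ => Finset.sum_congr rfl fun b1 _ => ?_
      rw [sum_range_mul' _ p s]
      refine Finset.sum_congr rfl fun a2 _ => Finset.sum_congr rfl fun b2 _ => ?_
      rw [sum_range_mul' _ p t]
    _ = ∑ a1 ∈ Finset.range r, ∑ b1 ∈ Finset.range p,
        ∑ a2 ∈ Finset.range s, ∑ b2 ∈ Finset.range p,
        ∑ a3 ∈ Finset.range t, ∑ b3 ∈ Finset.range p,
        (Nat.multinomial Finset.univ ![a1, a2, a3] : ZMod p) *
        (Nat.multinomial Finset.univ ![b1, b2, b3] : ZMod p) := by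
      refine Finset.sum_congr rfl fun a1 _ => Finset.sum_congr rfl fun b1 hb1 => ?_
      refine Finset.sum_congr rfl fun a2 _ => Finset.sum_congr rfl fun b2 hb2 => ?_
      refine Finset.sum_congr rfl fun a3 _ => Finset.sum_congr rfl fun b3 hb3 => ?_
      exact mult_lucas (Finset.mem_range.mp hb1) (Finset.mem_range.mp hb2)
        (Finset.mem_range.mp hb3)
    _ = (∑ a1 ∈ Finset.range r, ∑ a2 ∈ Finset.range s, ∑ a3 ∈ Finset.range t,
          (Nat.multinomial Finset.univ ![a1, a2, a3] : ZMod p)) *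
        (∑ b1 ∈ Finset.range p, ∑ b2 ∈ Finset.range p, ∑ b3 ∈ Finset.range p,
          (Nat.multinomial Finset.univ ![b1, b2, b3] : ZMod p)) := by
      rw [Finset.sum_mul_sum]
      refine Finset.sum_congr rfl fun a1 _ => Finset.sum_congr rfl fun b1 _ => ?_
      rw [Finset.sum_mul_sum]
      refine Finset.sum_congr rfl fun a2 _ => Finset.sum_congr rfl fun b2 _ => ?_
      rw [Finset.sum_mul_sum]
    _ = ∑ m1 ∈ Finset.range r, ∑ m2 ∈ Finset.range s, ∑ m3 ∈ Finset.range t,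
          (Nat.multinomial Finset.univ ![m1, m2, m3] : ZMod p) := by
      rw [box_sum_eq_one hp3, mul_one]
end
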